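/- Assume setting (C1), let f_n ∈ C(A_n) for each n ≥ 1 and let f ∈ C(A). The following are equivalent: (a) f_n ⇀ f; (b) the function f̃ on the set Ã = ({0} × A) ∪ ⋃_{n≥1} ({1/n} × A_n) ⊆ [0,1] × B, defined by f̃(1/n, x) = f_n(x) for x ∈ A_n and f̃(0, x) = f(x) for x ∈ A, is continuous on Ã with the topology induced from [0,1] × B; (c) there exist functions g_n, g ∈ C(B) with g_n|_{A_n} = f_n for all n, g|_A = f, and g_n → g uniformly on B. -/

import Mathlib

open Filter Topology



private lemma stmt2_inj {m n : ℕ} (h : (1 : ℝ)/(m+1) = 1/(n+1)) : m = n := by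
  have hm : (0:ℝ) < m + 1 := by positivity
  have hn : (0:ℝ) < n + 1 := by positivity
  field_simp at h
  exact_mod_cast (by linarith : (m:ℝ) = n)

private lemma stmt2_ext {X : Type*} [MetricSpace X] {s : Set X} (hs : IsClosed s)
    {f : X → ℝ} (hf : ContinuousOn f s) :
    ∃ F : X → ℝ, Continuous F ∧ ∀ x ∈ s, F x = f x := by
  obtain ⟨G, hG⟩ := ContinuousMap.exists_restrict_eq (Y := ℝ) hs ⟨s.restrict f, hf.restrict⟩
  refine ⟨G, G.continuous, fun x hx => ?_⟩
  exact congrFun (congrArg DFunLike.coe hG) ⟨x, hx⟩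

private lemma stmt2_star {B : Type*} [MetricSpace B] [CompactSpace B]
    (A : ℕ → Set B) (Ainf : Set B)
    (hAc : ∀ n, IsCompact (A n)) (hAne : ∀ n, (A n).Nonempty)
    (hAinfc : IsCompact Ainf) (hAinfne : Ainf.Nonempty)
    (hH : Tendsto (fun n => Metric.hausdorffDist (A n) Ainf) atTop (𝓝 0))
    (f : ℕ → B → ℝ) (g : B → ℝ)
    (ha : ∀ x ∈ Ainf, ∀ xs : ℕ → B, (∀ n, xs n ∈ A n) →
        Tendsto xs atTop (𝓝 x) →
        Tendsto (fun n => f n (xs n)) atTop (𝓝 (g x)))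
    (G0 : B → ℝ) (hG0 : Continuous G0) (hG0e : ∀ x ∈ Ainf, G0 x = g x)
    {ε : ℝ} (hε : 0 < ε) :
    ∀ᶠ n in atTop, ∀ y ∈ A n, |f n y - G0 y| < ε := by
  classical
  by_contra hcon
  rw [Filter.not_eventually] at hcon
  have hedist : ∀ n, EMetric.hausdorffEdist (A n) Ainf ≠ ⊤ := fun n =>
    Metric.hausdorffEdist_ne_top_of_nonempty_of_bounded (hAne n) hAinfne
      (hAc n).isBounded hAinfc.isBounded
  obtain ⟨φ, hφ, hP⟩ := Filter.extraction_of_frequently_atTop hcon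
  have hP' : ∀ k, ∃ y ∈ A (φ k), ε ≤ |f (φ k) y - G0 y| := by
    intro k
    have := hP k
    push_neg at this
    exact this
  choose y hy hyε using hP'
  obtain ⟨x, -, ψ, hψ, hyx⟩ := isCompact_univ.tendsto_subseq (fun k => Set.mem_univ (y k))
  set θ : ℕ → ℕ := φ ∘ ψ with hθdef
  have hθm : StrictMono θ := hφ.comp hψ
  have hθtop : Tendsto θ atTop atTop := hθm.tendsto_atTop
  have hxA : x ∈ Ainf := by
    rw [hAinfc.isClosed.mem_iff_infDist_zero hAinfne]
    have h1 : Tendsto (fun k => Metric.infDist (y (ψ k)) Ainf) atTop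
        (𝓝 (Metric.infDist x Ainf)) :=
      ((Metric.continuous_infDist_pt Ainf).tendsto x).comp hyx
    have h2 : Tendsto (fun k => Metric.hausdorffDist (A (θ k)) Ainf) atTop (𝓝 0) :=
      hH.comp hθtop
    have hle : ∀ k, Metric.infDist (y (ψ k)) Ainf ≤ Metric.hausdorffDist (A (θ k)) Ainf :=
      fun k => Metric.infDist_le_hausdorffDist_of_mem (hy (ψ k)) (hedist (θ k))
    exact le_antisymm (le_of_tendsto_of_tendsto' h1 h2 hle) Metric.infDist_nonneg
  have hz : ∀ n, ∃ z ∈ A n, dist z x ≤ Metric.hausdorffDist (A n) Ainf := by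
    intro n
    obtain ⟨z, hzA, hzd⟩ := (hAc n).exists_infDist_eq_dist (hAne n) x
    refine ⟨z, hzA, ?_⟩
    rw [dist_comm, ← hzd, ← Metric.hausdorffDist_comm]
    refine Metric.infDist_le_hausdorffDist_of_mem hxA ?_
    rw [EMetric.hausdorffEdist_comm]
    exact hedist n
  choose z hzA hzd using hz
  set xs : ℕ → B := fun n => if h : ∃ k, θ k = n then y (ψ h.choose) else z n with hxsdef
  have hxsA : ∀ n, xs n ∈ A n := by
    intro n
    by_cases h : ∃ k, θ k = n
    · have hc : θ h.choose = n := h.choose_spec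
      simp only [hxsdef, dif_pos h]
      have h2 := hy (ψ h.choose)
      rw [show φ (ψ h.choose) = n from hc] at h2
      exact h2
    · simp only [hxsdef, dif_neg h]
      exact hzA n
  have hxst : Tendsto xs atTop (𝓝 x) := by
    rw [Metric.tendsto_atTop]
    intro δ hδ
    obtain ⟨K, hK⟩ := (Metric.tendsto_atTop.mp hyx) δ hδ
    obtain ⟨M, hM⟩ := (Metric.tendsto_atTop.mp hH) δ hδ
    refine ⟨max (θ K) M, fun n hn => ?_⟩
    by_cases h : ∃ k, θ k = n
    · have hc : θ h.choose = n := h.choose_spec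
      have hkK : K ≤ h.choose := by
        rw [← hθm.le_iff_le, hc]
        exact le_trans (le_max_left _ _) hn
      simp only [hxsdef, dif_pos h]
      exact hK _ hkK
    · simp only [hxsdef, dif_neg h]
      have := hM n (le_trans (le_max_right _ _) hn)
      rw [Real.dist_eq, sub_zero, abs_of_nonneg Metric.hausdorffDist_nonneg] at this
      exact lt_of_le_of_lt (hzd n) this
  have hmain := (ha x hxA xs hxsA hxst).comp hθtop
  have hG0t : Tendsto (fun k => G0 (y (ψ k))) atTop (𝓝 (g x)) := by
    rw [← hG0e x hxA]
    exact (hG0.tendsto x).comp hyx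
  have hxseq : ∀ k, xs (θ k) = y (ψ k) := by
    intro k
    have h : ∃ k', θ k' = θ k := ⟨k, rfl⟩
    have hc : θ h.choose = θ k := h.choose_spec
    have : h.choose = k := hθm.injective hc
    simp only [hxsdef, dif_pos h, this]
  have hdiff : Tendsto (fun k => f (θ k) (y (ψ k)) - G0 (y (ψ k))) atTop (𝓝 0) := by
    have := hmain.sub hG0t
    simp only [Function.comp] at this
    simpa [hxseq] using this
  have := hdiff.eventually (Metric.ball_mem_nhds (0:ℝ) hε)
  obtain ⟨k, hk⟩ := this.exists
  rw [Real.dist_eq, sub_zero] at hk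
  exact absurd hk (not_lt.mpr (hyε (ψ k)))

/-- Under setting (C1), for `f n ∈ C(A n)` and `g ∈ C(A)`,
the following are equivalent:
(a) `f_n ⇀ g`;
(b) the glued function on `Ã = ({0} × A) ∪ ⋃ₙ ({1/(n+1)} × A n) ⊆ ℝ × B` is continuous;
(c) there are continuous extensions `G n, Ginf ∈ C(B)` of `f n, g` with
`G n → Ginf` uniformly on `B`. -/
theorem stmt2 {B : Type*} [MetricSpace B] [CompactSpace B]
    (A : ℕ → Set B) (Ainf : Set B)
    (hAc : ∀ n, IsCompact (A n)) (hAne : ∀ n, (A n).Nonempty)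
    (hAinfc : IsCompact Ainf) (hAinfne : Ainf.Nonempty)
    (hH : Tendsto (fun n => Metric.hausdorffDist (A n) Ainf) atTop (𝓝 0))
    (f : ℕ → B → ℝ) (hfc : ∀ n, ContinuousOn (f n) (A n))
    (g : B → ℝ) (hgc : ContinuousOn g Ainf) :
    ((∀ x ∈ Ainf, ∀ xs : ℕ → B, (∀ n, xs n ∈ A n) →
        Tendsto xs atTop (𝓝 x) →
        Tendsto (fun n => f n (xs n)) atTop (𝓝 (g x))) ↔
      (∀ F : ℝ × B → ℝ,
        (∀ x ∈ Ainf, F (0, x) = g x) →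
        (∀ n, ∀ x ∈ A n, F (1 / (n + 1 : ℝ), x) = f n x) →
        ContinuousOn F (({(0:ℝ)} ×ˢ Ainf) ∪ ⋃ n : ℕ, {(1 / (n + 1 : ℝ))} ×ˢ A n))) ∧
    ((∀ x ∈ Ainf, ∀ xs : ℕ → B, (∀ n, xs n ∈ A n) →
        Tendsto xs atTop (𝓝 x) →
        Tendsto (fun n => f n (xs n)) atTop (𝓝 (g x))) ↔
      (∃ G : ℕ → B → ℝ, ∃ Ginf : B → ℝ,
        (∀ n, Continuous (G n)) ∧ Continuous Ginf ∧
        (∀ n, ∀ x ∈ A n, G n x = f n x) ∧ (∀ x ∈ Ainf, Ginf x = g x) ∧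
        TendstoUniformly G Ginf atTop)) := by
  classical
  obtain ⟨G0, hG0c, hG0e⟩ := stmt2_ext hAinfc.isClosed hgc
  set S := ({(0:ℝ)} ×ˢ Ainf) ∪ ⋃ n : ℕ, {(1 / (n + 1 : ℝ))} ×ˢ A n with hSdef
  have hab : (∀ x ∈ Ainf, ∀ xs : ℕ → B, (∀ n, xs n ∈ A n) →
        Tendsto xs atTop (𝓝 x) →
        Tendsto (fun n => f n (xs n)) atTop (𝓝 (g x))) →
      ∀ F : ℝ × B → ℝ, (∀ x ∈ Ainf, F (0, x) = g x) →
        (∀ n, ∀ x ∈ A n, F (1 / (n + 1 : ℝ), x) = f n x) →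
        ContinuousOn F S := by
    intro ha F hF0 hFn
    rintro p (hp | hp)
    · -- point on the 0-slice
      obtain ⟨hp1, hp2⟩ := hp
      rw [Set.mem_singleton_iff] at hp1
      have hFp : F p = g p.2 := by
        rw [show p = (0, p.2) from Prod.ext hp1 rfl]
        exact hF0 p.2 hp2
      rw [ContinuousWithinAt, hFp, Filter.tendsto_iff_seq_tendsto]
      intro u hu
      rw [tendsto_nhdsWithin_iff] at hu
      obtain ⟨hu1, hu2⟩ := hu
      rw [Metric.tendsto_nhds]
      intro ε hε
      have hstar := stmt2_star A Ainf hAc hAne hAinfc hAinfne hH f g ha G0 hG0c hG0e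
        (half_pos hε)
      obtain ⟨N0, hN0⟩ := eventually_atTop.mp hstar
      have hu2' : Tendsto (fun k => (u k).2) atTop (𝓝 p.2) := (continuous_snd.tendsto p).comp hu1
      have hu1' : Tendsto (fun k => (u k).1) atTop (𝓝 (0:ℝ)) := by
        have := (continuous_fst.tendsto p).comp hu1
        rwa [hp1] at this
      have hG0t : Tendsto (fun k => G0 (u k).2) atTop (𝓝 (g p.2)) := by
        rw [← hG0e p.2 hp2]; exact (hG0c.tendsto p.2).comp hu2'
      have hev1 : ∀ᶠ k in atTop, |G0 (u k).2 - g p.2| < ε/2 := by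
        have := hG0t.eventually (Metric.ball_mem_nhds _ (half_pos hε))
        filter_upwards [this] with k hk
        rwa [Real.dist_eq] at hk
      have hev2 : ∀ᶠ k in atTop, |(u k).1| < 1/(N0+1 : ℝ) := by
        have := hu1'.eventually (Metric.ball_mem_nhds _ (by positivity : (0:ℝ) < 1/(N0+1)))
        filter_upwards [this] with k hk
        rwa [Real.dist_eq, sub_zero] at hk
      filter_upwards [hu2, hev1, hev2] with k hk1 hk2 hk3
      rw [Function.comp_apply, Real.dist_eq]
      rcases hk1 with hk | hk
      · obtain ⟨hq1, hq2⟩ := hk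
        rw [Set.mem_singleton_iff] at hq1
        have : F (u k) = g (u k).2 := by
          rw [show u k = (0, (u k).2) from Prod.ext hq1 rfl]
          exact hF0 _ hq2
        rw [this, ← hG0e _ hq2]
        linarith [hk2]
      · obtain ⟨m, hm⟩ := Set.mem_iUnion.mp hk
        obtain ⟨hq1, hq2⟩ := hm
        rw [Set.mem_singleton_iff] at hq1
        have hmpos : (0:ℝ) < 1/(m+1) := by positivity
        have hlt : (1:ℝ)/(m+1) < 1/(N0+1) := by
          rw [hq1] at hk3
          rwa [abs_of_pos hmpos] at hk3
        have hNm : N0 ≤ m := by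
          have h5 := lt_of_one_div_lt_one_div (by positivity : (0:ℝ) < m+1) hlt
          have h6 : (N0:ℝ) < m := by linarith
          exact_mod_cast h6.le
        have hbound := hN0 m hNm (u k).2 hq2
        have : F (u k) = f m (u k).2 := by
          rw [show u k = (1/(m+1:ℝ), (u k).2) from Prod.ext hq1 rfl]
          exact hFn m _ hq2
        rw [this]
        have htri : |f m (u k).2 - g p.2| ≤
            |f m (u k).2 - G0 (u k).2| + |G0 (u k).2 - g p.2| := abs_sub_le _ _ _
        linarith
    · -- point on a 1/(n+1)-slice
      obtain ⟨n, hpn⟩ := Set.mem_iUnion.mp hp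
      obtain ⟨hp1, hp2⟩ := hpn
      rw [Set.mem_singleton_iff] at hp1
      set r : ℝ := 1/(n+1) - 1/(n+2) with hrdef
      have hb0 : (0:ℝ) < n + 1 := by positivity
      have hb1 : (0:ℝ) < n + 2 := by positivity
      have hr : 0 < r := by
        rw [hrdef, sub_pos]
        exact one_div_lt_one_div_of_lt hb0 (by linarith)
      set V : Set (ℝ × B) := {q | |q.1 - 1/(n+1)| < r} with hVdef
      have hVopen : IsOpen V := by
        have : V = (fun q : ℝ × B => q.1) ⁻¹' Metric.ball (1/(n+1)) r := by
          ext q; simp [hVdef, Metric.mem_ball, Real.dist_eq]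
        rw [this]; exact Metric.isOpen_ball.preimage continuous_fst
      have hpV : p ∈ V := by
        simp only [hVdef, Set.mem_setOf_eq, hp1, sub_self, abs_zero]
        exact hr
      have hV : V ∈ 𝓝 p := hVopen.mem_nhds hpV
      rw [← continuousWithinAt_inter hV]
      have hSV : S ∩ V ⊆ {(1 / (n + 1 : ℝ))} ×ˢ A n := by
        rintro q ⟨hqS, hqV⟩
        rcases hqS with hq | hq
        · exfalso
          obtain ⟨hq1, -⟩ := hq
          rw [Set.mem_singleton_iff] at hq1
          rw [hVdef, Set.mem_setOf_eq, hq1, hrdef] at hqV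
          have h3 : |(0:ℝ) - 1/(n+1)| = 1/(n+1) := by
            rw [zero_sub, abs_neg, abs_of_pos (by positivity)]
          rw [h3] at hqV
          have : (0:ℝ) < 1/(n+2) := by positivity
          linarith
        · obtain ⟨m, hqm⟩ := Set.mem_iUnion.mp hq
          obtain ⟨hq1, hq2⟩ := hqm
          rw [Set.mem_singleton_iff] at hq1
          have hmn : m = n := by
            by_contra hne
            rw [hVdef, Set.mem_setOf_eq, hq1, hrdef] at hqV
            obtain ⟨hlow, hhigh⟩ := abs_lt.mp hqV
            have ha0 : (0:ℝ) < m + 1 := by positivity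
            have hml : (1:ℝ)/(n+2) < 1/(m+1) := by linarith
            have hmn1 : (m:ℝ) + 1 < (n:ℝ) + 2 :=
              lt_of_one_div_lt_one_div hb1 hml
            have hmlen : m < n := by
              have h4 : m < n + 1 := by exact_mod_cast (by linarith : (m:ℝ) < (n:ℝ) + 1)
              omega
            have hn1 : 1 ≤ n := by omega
            have hnn0 : (0:ℝ) < n := by exact_mod_cast Nat.lt_of_lt_of_le Nat.zero_lt_one hn1
            have hm1len : (m:ℝ) + 1 ≤ n := by exact_mod_cast (by omega : m + 1 ≤ n)
            have h1a : (1:ℝ)/n ≤ 1/(m+1) := one_div_le_one_div_of_le ha0 hm1len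
            have e1 : (1:ℝ)/n - 1/(n+1) = 1/(n*(n+1)) := by field_simp; ring
            have e2 : (1:ℝ)/(n+1) - 1/(n+2) = 1/((n+1)*(n+2)) := by field_simp; ring
            have key : (1:ℝ)/(n+1) - 1/(n+2) < 1/n - 1/(n+1) := by
              rw [e1, e2]
              exact one_div_lt_one_div_of_lt (by positivity) (by nlinarith)
            linarith
          subst hmn
          exact ⟨hq1, hq2⟩
      have hbase : ContinuousWithinAt (fun q : ℝ × B => f n q.2) (S ∩ V) p := by
        have hcont : ContinuousOn (fun q : ℝ × B => f n q.2) (Set.univ ×ˢ A n) :=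
          (hfc n).comp continuous_snd.continuousOn (fun q hq => hq.2)
        have hsub : S ∩ V ⊆ Set.univ ×ˢ A n := fun q hq => ⟨trivial, (hSV hq).2⟩
        exact (hcont.mono hsub) p ⟨Or.inr hp, hpV⟩
      refine hbase.congr ?_ ?_
      · intro q hq
        obtain ⟨hq1, hq2⟩ := hSV hq
        rw [Set.mem_singleton_iff] at hq1
        rw [show q = (1/(n+1:ℝ), q.2) from Prod.ext hq1 rfl]
        exact hFn n q.2 hq2
      · rw [show p = (1/(n+1:ℝ), p.2) from Prod.ext hp1 rfl]
        exact hFn n p.2 hp2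
  have hba : (∀ F : ℝ × B → ℝ, (∀ x ∈ Ainf, F (0, x) = g x) →
        (∀ n, ∀ x ∈ A n, F (1 / (n + 1 : ℝ), x) = f n x) →
        ContinuousOn F S) →
      ∀ x ∈ Ainf, ∀ xs : ℕ → B, (∀ n, xs n ∈ A n) →
        Tendsto xs atTop (𝓝 x) →
        Tendsto (fun n => f n (xs n)) atTop (𝓝 (g x)) := by
    intro hb x hx xs hxsA hxst
    set F : ℝ × B → ℝ :=
      fun q => if h : ∃ n : ℕ, q.1 = 1/(n+1) then f h.choose q.2 else g q.2 with hFdef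
    have hF0 : ∀ x' ∈ Ainf, F (0, x') = g x' := by
      intro x' _
      have h : ¬ ∃ n : ℕ, ((0, x') : ℝ × B).1 = 1/(n+1 : ℝ) := by
        rintro ⟨n, hn⟩
        have hpos : (0:ℝ) < 1/(n+1) := by positivity
        rw [← hn] at hpos
        exact lt_irrefl _ hpos
      simp only [hFdef, dif_neg h]
    have hFn : ∀ n, ∀ x' ∈ A n, F (1/(n+1:ℝ), x') = f n x' := by
      intro n x' _
      have h : ∃ k : ℕ, ((1/(n+1:ℝ), x') : ℝ × B).1 = 1/(k+1 : ℝ) := ⟨n, rfl⟩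
      have hch : h.choose = n := stmt2_inj h.choose_spec.symm
      simp only [hFdef, dif_pos h, hch]
    have hFc := hb F hF0 hFn
    have hmem : ((0:ℝ), x) ∈ S := Or.inl ⟨rfl, hx⟩
    have hcw := hFc _ hmem
    have hu : Tendsto (fun k : ℕ => ((1/(k+1:ℝ), xs k) : ℝ × B)) atTop (𝓝[S] (0, x)) := by
      rw [tendsto_nhdsWithin_iff]
      refine ⟨tendsto_one_div_add_atTop_nhds_zero_nat.prodMk_nhds hxst, ?_⟩
      exact Eventually.of_forall fun k => Or.inr (Set.mem_iUnion.mpr ⟨k, rfl, hxsA k⟩)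
    have h2 := hcw.tendsto.comp hu
    rw [hF0 x hx] at h2
    have h3 : ∀ k, (F ∘ fun k : ℕ => ((1/(k+1:ℝ), xs k) : ℝ × B)) k = f k (xs k) := by
      intro k
      exact hFn k (xs k) (hxsA k)
    exact Tendsto.congr h3 h2
  have hac : (∀ x ∈ Ainf, ∀ xs : ℕ → B, (∀ n, xs n ∈ A n) →
        Tendsto xs atTop (𝓝 x) →
        Tendsto (fun n => f n (xs n)) atTop (𝓝 (g x))) →
      ∃ G : ℕ → B → ℝ, ∃ Ginf : B → ℝ,
        (∀ n, Continuous (G n)) ∧ Continuous Ginf ∧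
        (∀ n, ∀ x ∈ A n, G n x = f n x) ∧ (∀ x ∈ Ainf, Ginf x = g x) ∧
        TendstoUniformly G Ginf atTop := by
    intro ha
    have hE : ∀ n, ∃ E : B → ℝ, Continuous E ∧ ∀ x ∈ A n, E x = f n x :=
      fun n => stmt2_ext (hAc n).isClosed (hfc n)
    choose E hEc hEe using hE
    have hne : ∀ n, Nonempty (A n) := fun n => (hAne n).to_subtype
    set c : ℕ → ℝ := fun n => ⨆ y : A n, |f n (y:B) - G0 y| with hcdef
    have hbdd : ∀ n, BddAbove (Set.range fun y : A n => |f n (y:B) - G0 y|) := by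
      intro n
      refine BddAbove.mono ?_ ((hAc n).image_of_continuousOn
        (((hfc n).sub hG0c.continuousOn).abs)).bddAbove
      rintro _ ⟨y, rfl⟩
      exact ⟨y, y.2, rfl⟩
    have hcb : ∀ n, ∀ y ∈ A n, |f n y - G0 y| ≤ c n := fun n y hy =>
      le_ciSup (hbdd n) (⟨y, hy⟩ : A n)
    have hc0 : ∀ n, 0 ≤ c n := by
      intro n
      obtain ⟨y, hy⟩ := hAne n
      exact le_trans (abs_nonneg _) (hcb n y hy)
    set G : ℕ → B → ℝ := fun n x => G0 x + max (-(c n)) (min (c n) (E n x - G0 x)) with hGdef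
    refine ⟨G, G0, ?_, hG0c, ?_, hG0e, ?_⟩
    · intro n
      exact hG0c.add (continuous_const.max (continuous_const.min ((hEc n).sub hG0c)))
    · intro n x hx
      obtain ⟨hl, hh⟩ := abs_le.mp (hcb n x hx)
      simp only [hGdef, hEe n x hx]
      rw [min_eq_right hh, max_eq_right hl]
      ring
    · rw [Metric.tendstoUniformly_iff]
      intro ε hε
      have hstar := stmt2_star A Ainf hAc hAne hAinfc hAinfne hH f g ha G0 hG0c hG0e
        (half_pos hε)
      filter_upwards [hstar] with n hn x
      have hcn : c n ≤ ε/2 := ciSup_le (fun y => (hn y y.2).le)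
      have hclamp : |max (-(c n)) (min (c n) (E n x - G0 x))| ≤ c n := by
        rw [abs_le]
        exact ⟨le_max_left _ _, max_le (by linarith [hc0 n]) (min_le_left _ _)⟩
      rw [Real.dist_eq]
      have heq : G0 x - G n x = -(max (-(c n)) (min (c n) (E n x - G0 x))) := by
        simp only [hGdef]; ring
      rw [heq, abs_neg]
      linarith
  have hca : (∃ G : ℕ → B → ℝ, ∃ Ginf : B → ℝ,
        (∀ n, Continuous (G n)) ∧ Continuous Ginf ∧
        (∀ n, ∀ x ∈ A n, G n x = f n x) ∧ (∀ x ∈ Ainf, Ginf x = g x) ∧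
        TendstoUniformly G Ginf atTop) →
      ∀ x ∈ Ainf, ∀ xs : ℕ → B, (∀ n, xs n ∈ A n) →
        Tendsto xs atTop (𝓝 x) →
        Tendsto (fun n => f n (xs n)) atTop (𝓝 (g x)) := by
    rintro ⟨G, Ginf, hGc, hGinfc, hGe, hGinfe, hGu⟩ x hx xs hxsA hxst
    have h1 := hGu.tendsto_comp hGinfc.continuousAt hxst
    rw [hGinfe x hx] at h1
    exact h1.congr (fun n => hGe n (xs n) (hxsA n))
  exact ⟨⟨hab, hba⟩, ⟨hac, hca⟩⟩
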